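/- Let Θ ∈ ℝ^{ℓ×n} and z ∈ ℝ^n with Θz ≠ 0, and define P(z,Θ) = I_n − (2/‖Θz‖²) z (Θz)ᵀ Θ. Then for all x ∈ ℝ^n, ‖Θ · P(z,Θ) · x‖₂ = ‖Θx‖₂, i.e., P(z,Θ) is an isometry with respect to the sketched (semi-)norm x ↦ ‖Θx‖. -/

import Mathlib

open Matrix

/-- Euclidean norm of a finitely supported real vector. -/
noncomputable def eucNorm {k : Type*} [Fintype k] (v : k → ℝ) : ℝ := Real.sqrt (v ⬝ᵥ v)

/-- The randomized Householder reflector `P(z, Θ) = I - (2/‖Θz‖²) z (Θz)ᵀ Θ`. -/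
noncomputable def rhouse {l n : ℕ} (Θ : Matrix (Fin l) (Fin n) ℝ) (z : Fin n → ℝ) :
    Matrix (Fin n) (Fin n) ℝ :=
  1 - (2 / ((Θ.mulVec z) ⬝ᵥ (Θ.mulVec z))) • (Matrix.vecMulVec z (Θ.mulVec z) * Θ)

lemma vecMulVec_mulVec' {m n : ℕ} (w : Fin m → ℝ) (v x : Fin n → ℝ) :
    (Matrix.vecMulVec w v).mulVec x = (v ⬝ᵥ x) • w := by
  funext i
  simp [Matrix.mulVec, Matrix.vecMulVec, dotProduct, Finset.mul_sum, mul_comm,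
    mul_assoc, mul_left_comm]

/-- `P(z,Θ)` is a sketch-isometry: `‖Θ P(z,Θ) x‖₂ = ‖Θ x‖₂` for all `x`. -/
theorem rhouse_sketch_isometric {l n : ℕ} (Θ : Matrix (Fin l) (Fin n) ℝ) (z : Fin n → ℝ)
    (hz : Θ.mulVec z ≠ 0) :
    ∀ x : Fin n → ℝ, eucNorm (Θ.mulVec ((rhouse Θ z).mulVec x)) = eucNorm (Θ.mulVec x) := by
  intro x
  set w := Θ.mulVec z with hw
  have hww : w ⬝ᵥ w ≠ 0 := by
    simpa [dotProduct_self_eq_zero] using hz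
  set c : ℝ := 2 / (w ⬝ᵥ w) with hc
  set s : ℝ := w ⬝ᵥ Θ.mulVec x with hs
  have key : Θ.mulVec ((rhouse Θ z).mulVec x) = Θ.mulVec x - (c * s) • w := by
    rw [rhouse]
    rw [Matrix.sub_mulVec, Matrix.smul_mulVec, Matrix.one_mulVec,
      ← Matrix.mulVec_mulVec, vecMulVec_mulVec', Matrix.mulVec_sub, Matrix.mulVec_smul,
      Matrix.mulVec_smul]
    simp [← hw, ← hc, ← hs, mul_smul, sub_right_inj]
  rw [key]
  unfold eucNorm
  congr 1
  rw [sub_dotProduct, dotProduct_sub, dotProduct_sub,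
    smul_dotProduct, smul_dotProduct, dotProduct_smul,
    dotProduct_smul, dotProduct_comm (Θ.mulVec x) w, ← hs, hc]
  field_simp
  have h1 : (w ⬝ᵥ w) * (w ⬝ᵥ w)⁻¹ = 1 := mul_inv_cancel₀ hww
  linear_combination (4 * s ^ 2 * (w ⬝ᵥ w)⁻¹) * h1
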